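/- For every n ≥ 0, every ν ∈ {α, β, γ}, and all z, w ∈ ℂ not on 𝕋, not among the poles of φ_n^ν or φ_{n+1}^ν, and such that the denominators below are nonzero, the Christoffel–Darboux relations hold: k_n^ν(z, w) = [φ_n^{ν*}(z)·conj(φ_n^{ν*}(w)) − ζ_n^ν(z)·conj(ζ_n^ν(w))·φ_n^ν(z)·conj(φ_n^ν(w))] / (1 − ζ_n^ν(z)·conj(ζ_n^ν(w))) = [φ_{n+1}^{ν*}(z)·conj(φ_{n+1}^{ν*}(w)) − φ_{n+1}^ν(z)·conj(φ_{n+1}^ν(w))] / (1 − ζ_{n+1}^ν(z)·conj(ζ_{n+1}^ν(w))). -/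

import Mathlib

noncomputable section
open MeasureTheory
open scoped Classical

namespace ORF

/-- complex conjugation -/
def conj' (z : ℂ) : ℂ := (starRingEnd ℂ) z

/-- membership in the unit circle 𝕋 -/
def onT (z : ℂ) : Prop := ‖z‖ = 1

/-- `z` is a (strictly) positive real number -/
def posR (z : ℂ) : Prop := 0 < z.re ∧ z.im = 0

/-- σ_j = conj(α_j)/|α_j| (σ_j = 1 if α_j = 0, i.e. if β_j = ∞) -/
def sig (α : ℕ → ℂ) (j : ℕ) : ℂ :=
  if α j = 0 then 1 else conj' (α j) / ((‖α j‖ : ℝ) : ℂ)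

/-- ς_n = ∏_{j=1}^n σ_j -/
def sigProd (α : ℕ → ℂ) (n : ℕ) : ℂ := ∏ j ∈ Finset.Icc 1 n, sig α j

/-- ϖ_j^α(z) = 1 − conj(α_j)·z, as a polynomial in z -/
def wA (α : ℕ → ℂ) (j : ℕ) : Polynomial ℂ :=
  1 - Polynomial.C (conj' (α j)) * Polynomial.X

/-- ϖ_j^β(z) = 1 − conj(β_j)·z = 1 − z/α_j, and −z when β_j = ∞ (α_j = 0) -/
def wB (α : ℕ → ℂ) (j : ℕ) : Polynomial ℂ :=
  if α j = 0 then -Polynomial.X else 1 - Polynomial.C (α j)⁻¹ * Polynomial.X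

/-- ϖ_j = ϖ_j^γ (γ_j = α_j when `c j`, γ_j = β_j otherwise) -/
def wG (α : ℕ → ℂ) (c : ℕ → Bool) (j : ℕ) : Polynomial ℂ :=
  if c j then wA α j else wB α j

/-- π_n^α -/
def piA (α : ℕ → ℂ) (n : ℕ) : Polynomial ℂ := ∏ j ∈ Finset.Icc 1 n, wA α j
/-- π_n^β -/
def piB (α : ℕ → ℂ) (n : ℕ) : Polynomial ℂ := ∏ j ∈ Finset.Icc 1 n, wB α j
/-- π_n = π_n^γ -/
def piG (α : ℕ → ℂ) (c : ℕ → Bool) (n : ℕ) : Polynomial ℂ := ∏ j ∈ Finset.Icc 1 n, wG α c j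

/-- 𝕒_n = {1 ≤ j ≤ n : γ_j = α_j} -/
def aSet (c : ℕ → Bool) (n : ℕ) : Finset ℕ := (Finset.Icc 1 n).filter (fun j => c j = true)
/-- 𝕓_n = {1 ≤ j ≤ n : γ_j = β_j} -/
def bSet (c : ℕ → Bool) (n : ℕ) : Finset ℕ := (Finset.Icc 1 n).filter (fun j => c j = false)

/-- Blaschke factor ζ_j^α -/
def zetaA (α : ℕ → ℂ) (j : ℕ) (z : ℂ) : ℂ :=
  if α j = 0 then z else sig α j * (z - α j) / (1 - conj' (α j) * z)

/-- Blaschke factor ζ_j^β (β_j = 1/conj(α_j); ζ_j^β(z) = 1/z when β_j = ∞) -/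
def zetaB (α : ℕ → ℂ) (j : ℕ) (z : ℂ) : ℂ :=
  if α j = 0 then z⁻¹ else sig α j * (z - (conj' (α j))⁻¹) / (1 - z / α j)

/-- ζ_j = ζ_j^γ -/
def zetaG (α : ℕ → ℂ) (c : ℕ → Bool) (j : ℕ) (z : ℂ) : ℂ :=
  if c j then zetaA α j z else zetaB α j z

/-- B_n^α -/
def BA (α : ℕ → ℂ) (n : ℕ) (z : ℂ) : ℂ := ∏ j ∈ Finset.Icc 1 n, zetaA α j z
/-- B_n^β -/
def BB (α : ℕ → ℂ) (n : ℕ) (z : ℂ) : ℂ := ∏ j ∈ Finset.Icc 1 n, zetaB α j z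
/-- B̌_n^α = ∏_{j ∈ 𝕒_n} ζ_j -/
def BcA (α : ℕ → ℂ) (c : ℕ → Bool) (n : ℕ) (z : ℂ) : ℂ := ∏ j ∈ aSet c n, zetaG α c j z
/-- B̌_n^β = ∏_{j ∈ 𝕓_n} ζ_j -/
def BcB (α : ℕ → ℂ) (c : ℕ → Bool) (n : ℕ) (z : ℂ) : ℂ := ∏ j ∈ bSet c n, zetaG α c j z

/-- ζ̌_n^α (= ζ_n if γ_n = α_n, = 1 otherwise) -/
def zcA (α : ℕ → ℂ) (c : ℕ → Bool) (n : ℕ) (z : ℂ) : ℂ :=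
  if c n then zetaG α c n z else 1
/-- ζ̌_n^β (= ζ_n if γ_n = β_n, = 1 otherwise) -/
def zcB (α : ℕ → ℂ) (c : ℕ → Bool) (n : ℕ) (z : ℂ) : ℂ :=
  if c n then 1 else zetaG α c n z

/-- The space L_n^ν = {p/π_n^ν : deg p ≤ n}; a function `f` belongs to it if it agrees
with such a rational function on the unit circle (where all these objects live). -/
def Lsp (pip : ℕ → Polynomial ℂ) (n : ℕ) : Set (ℂ → ℂ) :=
  {f | ∃ p : Polynomial ℂ, p.natDegree ≤ n ∧ ∀ z, onT z → f z = p.eval z / (pip n).eval z}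

/-- L_{n*}^ν = {f_* : f ∈ L_n^ν} (again as functions on the unit circle, where
f_*(z) = conj(f(1/conj z)) = conj(f(z))) -/
def LstarSp (pip : ℕ → Polynomial ℂ) (n : ℕ) : Set (ℂ → ℂ) :=
  {f | ∃ p : Polynomial ℂ, p.natDegree ≤ n ∧ ∀ z, onT z → f z = conj' (p.eval z / (pip n).eval z)}

/-- R_n^ν = L_n^ν · L_{n*}^ν -/
def Rset (pip : ℕ → Polynomial ℂ) (n : ℕ) : Set (ℂ → ℂ) :=
  {h | ∃ g ∈ Lsp pip n, ∃ k ∈ LstarSp pip n, ∀ z, onT z → h z = g z * k z}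

/-- the substar conjugate f_*(z) = conj(f(1/conj z)) -/
def substar (f : ℂ → ℂ) : ℂ → ℂ := fun z => conj' (f ((conj' z)⁻¹))

/-- superstar conjugate q^*(z) = z^n conj(q(1/conj z)) of a polynomial of degree ≤ n -/
def pstar (n : ℕ) (q : Polynomial ℂ) : Polynomial ℂ :=
  ∑ k ∈ Finset.range (n + 1), Polynomial.C (conj' (q.coeff k)) * Polynomial.X ^ (n - k)

/-- the inner product ⟨f,g⟩ = ∫ conj(f) g dμ -/
def inn (μ : Measure ℂ) (f g : ℂ → ℂ) : ℂ := ∫ z, conj' (f z) * g z ∂μ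

/-- the reciprocal ORF φ_n^{ν*} = B_n^ν (φ_n^ν)_* (resp. φ_n^* = B̌_n^α B̌_n^β (φ_n)_*),
written out as the rational function ς_n p_n^{ν*}/π_n^ν -/
def starF (α : ℕ → ℂ) (pip : ℕ → Polynomial ℂ) (p : ℕ → Polynomial ℂ) (n : ℕ) (z : ℂ) : ℂ :=
  sigProd α n * (pstar n (p n)).eval z / (pip n).eval z

/-- `μ` is a probability measure on the unit circle 𝕋, positive a.e. on 𝕋 -/
structure CircleMeasure (μ : Measure ℂ) : Prop where
  prob : IsProbabilityMeasure μ
  circ : μ {z | ¬ onT z} = 0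
  pos : ∀ U : Set ℂ, IsOpen U → (U ∩ {z | onT z}).Nonempty → 0 < μ U

/-- `φ` (with numerators `p`) is the sequence of orthonormal rational functions for the
nested spaces `Lsp pip`: φ_0 = 1, φ_n = p_n/π_n ∈ L_n \ L_{n-1}, φ_n ⊥ L_{n-1}, ‖φ_n‖ = 1. -/
structure IsORF (μ : Measure ℂ) (pip : ℕ → Polynomial ℂ) (φ : ℕ → ℂ → ℂ)
    (p : ℕ → Polynomial ℂ) : Prop where
  rep : ∀ n z, φ n z = (p n).eval z / (pip n).eval z
  deg : ∀ n, (p n).natDegree ≤ n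
  p0 : p 0 = 1
  notmem : ∀ n, 1 ≤ n → φ n ∉ Lsp pip (n - 1)
  orth : ∀ n, 1 ≤ n → ∀ f ∈ Lsp pip (n - 1), inn μ (φ n) f = 0
  norm : ∀ n, inn μ (φ n) (φ n) = 1

/-- normalization φ_n^{α*}(α_n) > 0 -/
def normA (α : ℕ → ℂ) (p : ℕ → Polynomial ℂ) (n : ℕ) : Prop :=
  posR (sigProd α n * (pstar n (p n)).eval (α n) / (piA α n).eval (α n))

/-- normalization φ_n^{β*}(β_n) > 0 (when β_n = ∞ the value is the limit,
i.e. the ratio of the coefficients of z^n) -/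
def normB (α : ℕ → ℂ) (p : ℕ → Polynomial ℂ) (n : ℕ) : Prop :=
  if α n = 0 then posR (sigProd α n * (pstar n (p n)).coeff n / (piB α n).coeff n)
  else posR (sigProd α n * (pstar n (p n)).eval ((conj' (α n))⁻¹) /
    (piB α n).eval ((conj' (α n))⁻¹))

/-- π̌_n^α = ∏_{j∈𝕒_n} ϖ_j -/
def pidA (α : ℕ → ℂ) (c : ℕ → Bool) (n : ℕ) : Polynomial ℂ := ∏ j ∈ aSet c n, wA α j
/-- π̌_n^β = ∏_{j∈𝕓_n} ϖ_j -/
def pidB (α : ℕ → ℂ) (c : ℕ → Bool) (n : ℕ) : Polynomial ℂ := ∏ j ∈ bSet c n, wB α j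
/-- ∏_{j∈𝕓_n}(z − β_j), a factor being −1 when β_j = ∞ -/
def dB (α : ℕ → ℂ) (c : ℕ → Bool) (n : ℕ) : Polynomial ℂ :=
  ∏ j ∈ bSet c n,
    (if α j = 0 then (-1 : Polynomial ℂ) else Polynomial.X - Polynomial.C ((conj' (α j))⁻¹))
/-- ∏_{j∈𝕒_n}(z − α_j) -/
def dA (α : ℕ → ℂ) (c : ℕ → Bool) (n : ℕ) : Polynomial ℂ :=
  ∏ j ∈ aSet c n, (Polynomial.X - Polynomial.C (α j))

/-- ς̌_n^α = ∏_{j∈𝕒_n} σ_j -/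
def sigcA (α : ℕ → ℂ) (c : ℕ → Bool) (n : ℕ) : ℂ := ∏ j ∈ aSet c n, sig α j
/-- ς̌_n^β = ∏_{j∈𝕓_n} σ_j -/
def sigcB (α : ℕ → ℂ) (c : ℕ → Bool) (n : ℕ) : ℂ := ∏ j ∈ bSet c n, sig α j

/-- normalization for the γ-sequence: (φ_n^*/B̌_n^β)(α_n) > 0 when γ_n = α_n and
(φ_n^*/B̌_n^α)(β_n) > 0 when γ_n = β_n, written via the identities
φ_n^*/B̌_n^β = ς̌_n^α p_n^*/(π̌_n^α ∏_{j∈𝕓_n}(z−β_j)) and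
φ_n^*/B̌_n^α = ς̌_n^β p_n^*/(π̌_n^β ∏_{j∈𝕒_n}(z−α_j)) (the value at β_n = ∞ being the
limit, i.e. the ratio of the coefficients of z^n). -/
def normG (α : ℕ → ℂ) (c : ℕ → Bool) (p : ℕ → Polynomial ℂ) (n : ℕ) : Prop :=
  if c n then
    posR (sigcA α c n * (pstar n (p n)).eval (α n) /
      ((pidA α c n).eval (α n) * (dB α c n).eval (α n)))
  else if α n = 0 then
    posR (sigcB α c n * (pstar n (p n)).coeff n / ((pidB α c n) * dA α c n).coeff n)
  else
    posR (sigcB α c n * (pstar n (p n)).eval ((conj' (α n))⁻¹) /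
      ((pidB α c n) * dA α c n).eval ((conj' (α n))⁻¹))

/-- the reproducing kernel k_n(z,w) = Σ_{k=0}^n φ_k(z) conj(φ_k(w)) -/
def ker (φ : ℕ → ℂ → ℂ) (n : ℕ) (z w : ℂ) : ℂ :=
  ∑ k ∈ Finset.range (n + 1), φ k z * conj' (φ k w)

/-- evaluation of a polynomial of degree ≤ m at γ_j (its coefficient of z^m when γ_j = ∞) -/
def gEval (α : ℕ → ℂ) (c : ℕ → Bool) (m j : ℕ) (q : Polynomial ℂ) : ℂ :=
  if c j then q.eval (α j)
  else if α j = 0 then q.coeff m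
  else q.eval ((conj' (α j))⁻¹)

/-- evaluation of a polynomial of degree ≤ m at β_j (its coefficient of z^m when β_j = ∞) -/
def bEval (α : ℕ → ℂ) (m j : ℕ) (q : Polynomial ℂ) : ℂ :=
  if α j = 0 then q.coeff m else q.eval ((conj' (α j))⁻¹)

/-- η_n^α (the unimodular constant in the Szegő parameter λ_n^α) -/
def etaA (α : ℕ → ℂ) (p : ℕ → Polynomial ℂ) (n : ℕ) : ℂ :=
  conj' (sigProd α (n - 2)) * conj' ((pstar (n - 1) (p (n - 1))).eval (α (n - 1))) /
    ((pstar (n - 1) (p (n - 1))).eval (α (n - 1)))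

/-- the Szegő parameter λ_n^α -/
def lamA (α : ℕ → ℂ) (p : ℕ → Polynomial ℂ) (n : ℕ) : ℂ :=
  etaA α p n * (p n).eval (α (n - 1)) / conj' ((pstar n (p n)).eval (α (n - 1)))

/-- η_n^β -/
def etaB (α : ℕ → ℂ) (p : ℕ → Polynomial ℂ) (n : ℕ) : ℂ :=
  conj' (sigProd α (n - 2)) * conj' (bEval α (n - 1) (n - 1) (pstar (n - 1) (p (n - 1)))) /
    (bEval α (n - 1) (n - 1) (pstar (n - 1) (p (n - 1))))

/-- the Szegő parameter λ_n^β -/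
def lamB (α : ℕ → ℂ) (p : ℕ → Polynomial ℂ) (n : ℕ) : ℂ :=
  etaB α p n * bEval α n (n - 1) (p n) / conj' (bEval α n (n - 1) (pstar n (p n)))

/-- η_n = η_n^γ -/
def etaG (α : ℕ → ℂ) (c : ℕ → Bool) (p : ℕ → Polynomial ℂ) (n : ℕ) : ℂ :=
  conj' (sigProd α (n - 2)) * conj' (gEval α c (n - 1) (n - 1) (pstar (n - 1) (p (n - 1)))) /
    (gEval α c (n - 1) (n - 1) (pstar (n - 1) (p (n - 1))))

/-- the Szegő parameter λ_n = λ_n^γ -/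
def lamG (α : ℕ → ℂ) (c : ℕ → Bool) (p : ℕ → Polynomial ℂ) (n : ℕ) : ℂ :=
  etaG α c p n * gEval α c n (n - 1) (p n) / conj' (gEval α c n (n - 1) (pstar n (p n)))

/-- functions of the second kind: ψ(z) = ∫ E(t,z) φ(t) − D(t,z) φ(z) dμ(t) -/
def psi (μ : Measure ℂ) (φ : ℂ → ℂ) (z : ℂ) : ℂ :=
  ∫ t, (2 * t / (t - z)) * φ t - ((t + z) / (t - z)) * φ z ∂μ

/-- ∏_{j=k+1}^n ϖ_j -/
def tailProd (α : ℕ → ℂ) (c : ℕ → Bool) (n k : ℕ) : Polynomial ℂ :=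
  ∏ j ∈ Finset.Icc (k + 1) n, wG α c j

/-- the numerator C_n(z,w) of the kernel k_n = C_n/(π_n(z) conj(π_n(w))), as a polynomial
in w after conjugation: C_n(z,w) = conj((CnPoly n z).eval w) -/
def CnPoly (α : ℕ → ℂ) (c : ℕ → Bool) (p : ℕ → Polynomial ℂ) (n : ℕ) (z : ℂ) : Polynomial ℂ :=
  ∑ k ∈ Finset.range (n + 1),
    Polynomial.C (conj' ((p k).eval z * (tailProd α c n k).eval z)) * ((p k) * tailProd α c n k)

/-- z ↦ C_n(z,∞) (the coefficient of w^n of w ↦ C_n(z,w)), as a polynomial in z -/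
def CnInf (α : ℕ → ℂ) (c : ℕ → Bool) (p : ℕ → Polynomial ℂ) (n : ℕ) : Polynomial ℂ :=
  ∑ k ∈ Finset.range (n + 1),
    ((p k) * tailProd α c n k) * Polynomial.C (conj' (((p k) * tailProd α c n k).coeff n))

/-- ϖ_n^*(z) = z − γ_n (= −1 when γ_n = ∞) -/
def wstarG (α : ℕ → ℂ) (c : ℕ → Bool) (n : ℕ) : Polynomial ℂ :=
  if c n then Polynomial.X - Polynomial.C (α n)
  else if α n = 0 then -1
  else Polynomial.X - Polynomial.C ((conj' (α n))⁻¹)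

end ORF

open ORF MeasureTheory Polynomial

namespace ORF

lemma conj'_def (z : ℂ) : conj' z = (starRingEnd ℂ) z := rfl
lemma conj'_mul (a b : ℂ) : conj' (a * b) = conj' a * conj' b := map_mul _ _ _
lemma conj'_div (a b : ℂ) : conj' (a / b) = conj' a / conj' b := map_div₀ _ _ _
lemma conj'_one : conj' 1 = 1 := map_one _
lemma conj'_conj' (z : ℂ) : conj' (conj' z) = z := Complex.conj_conj z

lemma onT_iff {z : ℂ} : onT z ↔ z ∈ Metric.sphere (0:ℂ) 1 := by
  simp [onT, Metric.mem_sphere, Complex.dist_eq]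

lemma onT_ne_zero {z : ℂ} (hz : onT z) : z ≠ 0 := by
  intro h; rw [h] at hz; simp [onT] at hz

lemma onT_mul_conj {z : ℂ} (hz : onT z) : z * conj' z = 1 := by
  simp only [conj'_def, Complex.mul_conj]
  norm_cast
  rw [Complex.normSq_eq_norm_sq, hz]; norm_num

lemma onT_conj_mul {z : ℂ} (hz : onT z) : conj' z * z = 1 := by
  rw [mul_comm]; exact onT_mul_conj hz

lemma conj'_ne_zero {z : ℂ} (hz : z ≠ 0) : conj' z ≠ 0 := by
  simp [conj'_def, hz]

lemma sig_conj_mul (α : ℕ → ℂ) (j : ℕ) : conj' (sig α j) * sig α j = 1 := by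
  unfold sig
  by_cases h : α j = 0
  · simp [h, conj'_def]
  · simp only [h, if_false, conj'_def]
    have habs : ((‖α j‖ : ℝ) : ℂ) ≠ 0 := by
      simpa using h
    rw [map_div₀, Complex.conj_conj, Complex.conj_ofReal]
    field_simp
    rw [Complex.mul_conj]
    rw [Complex.normSq_eq_norm_sq]
    push_cast
    ring

lemma sigProd_succ (α : ℕ → ℂ) (m : ℕ) : sigProd α (m+1) = sigProd α m * sig α (m+1) :=
  Finset.prod_Icc_succ_top (by omega) _

lemma sigProd_conj_mul (α : ℕ → ℂ) (m : ℕ) : conj' (sigProd α m) * sigProd α m = 1 := by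
  unfold sigProd
  rw [conj'_def, map_prod, ← Finset.prod_mul_distrib]
  exact Finset.prod_eq_one (fun j _ => sig_conj_mul α j)

end ORF
namespace ORF

lemma wA_eval (α : ℕ → ℂ) (j : ℕ) (z : ℂ) : (wA α j).eval z = 1 - conj' (α j) * z := by
  simp [wA]

lemma wG_eval_ne (α : ℕ → ℂ) (hα : ∀ j, ‖α j‖ < 1) (c : ℕ → Bool) (j : ℕ)
    {z : ℂ} (hz : onT z) : (wG α c j).eval z ≠ 0 := by
  have h1 : (wA α j).eval z ≠ 0 := by
    rw [wA_eval]
    intro h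
    have : conj' (α j) * z = 1 := by linear_combination -h
    have := congrArg norm this
    rw [norm_mul, conj'_def, Complex.norm_conj, hz, mul_one, norm_one] at this
    exact absurd this (ne_of_lt (hα j))
  have h2 : (wB α j).eval z ≠ 0 := by
    unfold wB
    by_cases h : α j = 0
    · simp [h, onT_ne_zero hz]
    · simp only [h, if_false]
      simp only [eval_sub, eval_one, eval_mul, eval_C, eval_X]
      intro hh
      have : (α j)⁻¹ * z = 1 := by linear_combination -hh
      have := congrArg norm this
      rw [norm_mul, norm_inv, hz, mul_one, norm_one, inv_eq_one] at this
      exact absurd this (ne_of_lt (hα j))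
  unfold wG; split <;> assumption

lemma wstarG_eval_ne (α : ℕ → ℂ) (hα : ∀ j, ‖α j‖ < 1) (c : ℕ → Bool) (j : ℕ)
    {z : ℂ} (hz : onT z) : (wstarG α c j).eval z ≠ 0 := by
  unfold wstarG
  by_cases hc : c j <;> by_cases h : α j = 0 <;>
      simp only [hc, h, if_true, if_false, Bool.false_eq_true]
  · simpa using onT_ne_zero hz
  · simp only [eval_sub, eval_X, eval_C, sub_ne_zero]
    intro hh; rw [hh] at hz; exact absurd hz (ne_of_lt (hα j))
  · simp
  · simp only [eval_sub, eval_X, eval_C, sub_ne_zero]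
    intro hh
    have : ‖(conj' (α j))⁻¹‖ = 1 := by rw [← hh]; exact hz
    rw [norm_inv, conj'_def, Complex.norm_conj, inv_eq_one] at this
    exact absurd this (ne_of_lt (hα j))

lemma wG_eval_conj (α : ℕ → ℂ) (c : ℕ → Bool) (j : ℕ) {z : ℂ} (hz : onT z) :
    conj' ((wG α c j).eval z) = conj' z * (wstarG α c j).eval z := by
  have hzz : (starRingEnd ℂ) z * z = 1 := onT_conj_mul hz
  unfold wG wstarG wA wB
  by_cases hc : c j <;> by_cases h : α j = 0 <;>
    simp only [hc, h, if_true, if_false, Bool.false_eq_true] <;>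
    simp only [eval_sub, eval_one, eval_mul, eval_C, eval_X, eval_neg,
      conj'_def, map_sub, map_one, map_mul, map_neg, Complex.conj_conj, map_inv₀, h,
      map_zero, zero_mul, sub_zero]
  · linear_combination -hzz
  · linear_combination -hzz
  · ring
  · linear_combination -hzz

lemma wstarG_eval_conj (α : ℕ → ℂ) (c : ℕ → Bool) (j : ℕ) {z : ℂ} (hz : onT z) :
    conj' ((wstarG α c j).eval z) = conj' z * (wG α c j).eval z := by
  have hzz : (starRingEnd ℂ) z * z = 1 := onT_conj_mul hz
  unfold wG wstarG wA wB
  by_cases hc : c j <;> by_cases h : α j = 0 <;>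
    simp only [hc, h, if_true, if_false, Bool.false_eq_true] <;>
    simp only [eval_sub, eval_one, eval_mul, eval_C, eval_X, eval_neg,
      conj'_def, map_sub, map_one, map_mul, map_neg, Complex.conj_conj, map_inv₀, h,
      map_zero, zero_mul, sub_zero]
  · ring
  · linear_combination (starRingEnd ℂ) (α j) * hzz
  · linear_combination hzz
  · linear_combination (α j)⁻¹ * hzz

end ORF
namespace ORF

lemma Icc_one_eq_Ioc (m : ℕ) : Finset.Icc 1 m = Finset.Ioc 0 m := by
  rw [show (1:ℕ) = 0 + 1 from rfl, Finset.Icc_add_one_left_eq_Ioc]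

lemma piG_split (α : ℕ → ℂ) (c : ℕ → Bool) {k m : ℕ} (h : k ≤ m) :
    piG α c m = piG α c k * tailProd α c m k := by
  unfold piG tailProd
  rw [Icc_one_eq_Ioc, Icc_one_eq_Ioc, Finset.Icc_add_one_left_eq_Ioc]
  exact (Finset.prod_Ioc_consecutive _ (Nat.zero_le k) h).symm

lemma piG_succ (α : ℕ → ℂ) (c : ℕ → Bool) (m : ℕ) :
    piG α c (m+1) = piG α c m * wG α c (m+1) :=
  Finset.prod_Icc_succ_top (by omega) _

lemma piG_eval_ne (α : ℕ → ℂ) (hα : ∀ j, ‖α j‖ < 1) (c : ℕ → Bool) (m : ℕ)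
    {z : ℂ} (hz : onT z) : (piG α c m).eval z ≠ 0 := by
  unfold piG
  rw [eval_prod]
  exact Finset.prod_ne_zero_iff.2 (fun j _ => wG_eval_ne α hα c j hz)

lemma tailProd_eval_ne (α : ℕ → ℂ) (hα : ∀ j, ‖α j‖ < 1) (c : ℕ → Bool) (m k : ℕ)
    {z : ℂ} (hz : onT z) : (tailProd α c m k).eval z ≠ 0 := by
  unfold tailProd
  rw [eval_prod]
  exact Finset.prod_ne_zero_iff.2 (fun j _ => wG_eval_ne α hα c j hz)

/-- ∏_{j=1}^m ϖ_j^* -/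
def Wst (α : ℕ → ℂ) (c : ℕ → Bool) (m : ℕ) : Polynomial ℂ := ∏ j ∈ Finset.Icc 1 m, wstarG α c j

lemma Wst_succ (α : ℕ → ℂ) (c : ℕ → Bool) (m : ℕ) :
    Wst α c (m+1) = Wst α c m * wstarG α c (m+1) :=
  Finset.prod_Icc_succ_top (by omega) _

lemma Wst_eval_ne (α : ℕ → ℂ) (hα : ∀ j, ‖α j‖ < 1) (c : ℕ → Bool) (m : ℕ)
    {z : ℂ} (hz : onT z) : (Wst α c m).eval z ≠ 0 := by
  unfold Wst
  rw [eval_prod]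
  exact Finset.prod_ne_zero_iff.2 (fun j _ => wstarG_eval_ne α hα c j hz)

lemma piG_eval_conj (α : ℕ → ℂ) (c : ℕ → Bool) (m : ℕ) {z : ℂ} (hz : onT z) :
    conj' ((piG α c m).eval z) = (conj' z)^m * (Wst α c m).eval z := by
  unfold piG Wst
  rw [eval_prod, conj'_def, map_prod, eval_prod]
  have : ∀ j ∈ Finset.Icc 1 m, (starRingEnd ℂ) ((wG α c j).eval z)
      = conj' z * (wstarG α c j).eval z := fun j _ => wG_eval_conj α c j hz
  rw [Finset.prod_congr rfl this, Finset.prod_mul_distrib, Finset.prod_const,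
    Nat.card_Icc]
  norm_num

lemma Wst_eval_conj (α : ℕ → ℂ) (c : ℕ → Bool) (m : ℕ) {z : ℂ} (hz : onT z) :
    conj' ((Wst α c m).eval z) = (conj' z)^m * (piG α c m).eval z := by
  unfold piG Wst
  rw [eval_prod, conj'_def, map_prod, eval_prod]
  have : ∀ j ∈ Finset.Icc 1 m, (starRingEnd ℂ) ((wstarG α c j).eval z)
      = conj' z * (wG α c j).eval z := fun j _ => wstarG_eval_conj α c j hz
  rw [Finset.prod_congr rfl this, Finset.prod_mul_distrib, Finset.prod_const,
    Nat.card_Icc]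
  norm_num

lemma wG_natDegree (α : ℕ → ℂ) (c : ℕ → Bool) (j : ℕ) : (wG α c j).natDegree ≤ 1 := by
  unfold wG wA wB
  split
  · apply le_trans (natDegree_sub_le _ _)
    simp only [natDegree_one, zero_le, sup_le_iff, true_and]
    apply le_trans (natDegree_C_mul_le _ _); simp
  · split
    · simp
    · apply le_trans (natDegree_sub_le _ _)
      simp only [natDegree_one, zero_le, sup_le_iff, true_and]
      apply le_trans (natDegree_C_mul_le _ _); simp

lemma wstarG_natDegree (α : ℕ → ℂ) (c : ℕ → Bool) (j : ℕ) : (wstarG α c j).natDegree ≤ 1 := by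
  unfold wstarG
  split
  · apply le_trans (natDegree_sub_le _ _); simp
  · split
    · simp
    · apply le_trans (natDegree_sub_le _ _); simp

lemma tailProd_natDegree (α : ℕ → ℂ) (c : ℕ → Bool) (m k : ℕ) :
    (tailProd α c m k).natDegree ≤ m - k := by
  unfold tailProd
  calc (∏ j ∈ Finset.Icc (k+1) m, wG α c j).natDegree
      ≤ ∑ j ∈ Finset.Icc (k+1) m, (wG α c j).natDegree := natDegree_prod_le _ _
    _ ≤ ∑ _j ∈ Finset.Icc (k+1) m, 1 := Finset.sum_le_sum (fun j _ => wG_natDegree α c j)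
    _ = (Finset.Icc (k+1) m).card := by simp
    _ ≤ m - k := by rw [Nat.card_Icc]; omega

lemma pstar_natDegree (m : ℕ) (q : Polynomial ℂ) : (pstar m q).natDegree ≤ m := by
  unfold pstar
  apply le_trans (natDegree_sum_le _ _)
  simp only [Finset.fold_max_le]
  constructor
  · omega
  · intro k _
    apply le_trans (natDegree_C_mul_le _ _)
    simp

lemma pstar_eval_onT (m : ℕ) (q : Polynomial ℂ) (hq : q.natDegree ≤ m) {z : ℂ} (hz : onT z) :
    (pstar m q).eval z = z^m * conj' (q.eval z) := by
  unfold pstar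
  rw [eval_finset_sum]
  have hev : q.eval z = ∑ k ∈ Finset.range (m+1), q.coeff k * z^k := by
    rw [eval_eq_sum_range' (lt_of_le_of_lt hq (Nat.lt_succ_self m))]
  rw [hev, conj'_def, map_sum, Finset.mul_sum]
  apply Finset.sum_congr rfl
  intro k hk
  rw [Finset.mem_range] at hk
  have hkm : k ≤ m := by omega
  rw [eval_mul, eval_C, eval_pow, eval_X, map_mul, map_pow]
  have hzz : z * (starRingEnd ℂ) z = 1 := onT_mul_conj hz
  have : z ^ m = z ^ (m - k) * z ^ k := by rw [← pow_add]; congr 1; omega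
  rw [this, conj'_def]
  have : z ^ k * ((starRingEnd ℂ) z) ^ k = 1 := by
    rw [← mul_pow, hzz, one_pow]
  calc (starRingEnd ℂ) (q.coeff k) * z ^ (m-k)
      = (starRingEnd ℂ) (q.coeff k) * z ^ (m-k) * (z ^ k * ((starRingEnd ℂ) z) ^ k) := by
        rw [this, mul_one]
    _ = z ^ (m - k) * z ^ k * ((starRingEnd ℂ) (q.coeff k) * ((starRingEnd ℂ) z) ^ k) := by ring

lemma zetaG_formula (α : ℕ → ℂ) (c : ℕ → Bool) (j : ℕ) (z : ℂ) :
    zetaG α c j z = sig α j * (wstarG α c j).eval z / (wG α c j).eval z := by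
  unfold zetaG zetaA zetaB sig wstarG wG wA wB
  by_cases hc : c j <;> by_cases h : α j = 0 <;>
    simp only [hc, h, if_true, if_false, Bool.false_eq_true] <;>
    simp only [eval_sub, eval_one, eval_mul, eval_C, eval_X, eval_neg, map_zero,
      conj'_def, map_zero, zero_mul, sub_zero, eval_one]
  · simp
  · rw [one_mul, neg_div_neg_eq, one_div]
  · rw [div_eq_mul_inv z (α j), mul_comm z (α j)⁻¹]

end ORF
namespace ORF

open MeasureTheory

lemma integral_congr_onT {μ : Measure ℂ} (hc : μ {z | ¬ onT z} = 0) {f g : ℂ → ℂ}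
    (h : ∀ z, onT z → f z = g z) : ∫ z, f z ∂μ = ∫ z, g z ∂μ := by
  apply integral_congr_ae
  apply measure_mono_null (fun z hz => ?_) hc
  simp only [Set.mem_setOf_eq]
  intro hT
  exact hz (h z hT)

lemma integral_conj'_eq {μ : Measure ℂ} (f : ℂ → ℂ) :
    ∫ z, conj' (f z) ∂μ = conj' (∫ z, f z ∂μ) := integral_conj

/-- integrability of ratio integrands -/
lemma integrable_ratio {μ : Measure ℂ} (hprob : IsProbabilityMeasure μ)
    (hc : μ {z | ¬ onT z} = 0) (q r Q : Polynomial ℂ)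
    (hQ : ∀ z, onT z → Q.eval z ≠ 0) :
    Integrable (fun z => conj' (q.eval z / Q.eval z) * (r.eval z / Q.eval z)) μ := by
  haveI := hprob
  set f : ℂ → ℂ := fun z => conj' (q.eval z / Q.eval z) * (r.eval z / Q.eval z) with hf
  have hmeas : AEStronglyMeasurable f μ := by
    apply Measurable.aestronglyMeasurable
    apply Measurable.mul
    · apply (Complex.continuous_conj.measurable).comp
      apply Measurable.div
      · exact (Polynomial.continuous_aeval q).measurable
      · exact (Polynomial.continuous_aeval Q).measurable
    · apply Measurable.div
      · exact (Polynomial.continuous_aeval r).measurable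
      · exact (Polynomial.continuous_aeval Q).measurable
  have hcomp : IsCompact (Metric.sphere (0:ℂ) 1) := isCompact_sphere 0 1
  have hcont : ContinuousOn f (Metric.sphere (0:ℂ) 1) := by
    apply ContinuousOn.mul
    · apply Continuous.comp_continuousOn Complex.continuous_conj
      apply ContinuousOn.div
      · exact (Polynomial.continuous_aeval q).continuousOn
      · exact (Polynomial.continuous_aeval Q).continuousOn
      · intro z hz; exact hQ z (onT_iff.2 hz)
    · apply ContinuousOn.div
      · exact (Polynomial.continuous_aeval r).continuousOn
      · exact (Polynomial.continuous_aeval Q).continuousOn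
      · intro z hz; exact hQ z (onT_iff.2 hz)
  obtain ⟨C, hC⟩ := hcomp.exists_bound_of_continuousOn hcont
  apply Integrable.mono' (integrable_const C) hmeas
  apply measure_mono_null (fun z hz => ?_) hc
  simp only [Set.mem_setOf_eq] at hz ⊢
  intro hT
  exact hz (hC z (onT_iff.1 hT))

end ORF
namespace ORF

open MeasureTheory

variable {α : ℕ → ℂ} {c : ℕ → Bool} {μ : Measure ℂ} {φ : ℕ → ℂ → ℂ} {p : ℕ → Polynomial ℂ}

lemma uPoly_natDegree (hφ : IsORF μ (piG α c) φ p) {k M : ℕ} (hk : k ≤ M) :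
    (p k * tailProd α c M k).natDegree ≤ M := by
  apply le_trans (natDegree_mul_le)
  have := hφ.deg k
  have := tailProd_natDegree α c M k
  omega

lemma ratio_eq_phi (hα : ∀ j, ‖α j‖ < 1) (hφ : IsORF μ (piG α c) φ p)
    {k M : ℕ} (hk : k ≤ M) {z : ℂ} (hz : onT z) :
    (p k * tailProd α c M k).eval z / (piG α c M).eval z = φ k z := by
  rw [hφ.rep k z, piG_split α c hk, eval_mul, eval_mul,
    mul_div_mul_right _ _ (tailProd_eval_ne α hα c M k hz)]

lemma inn_conj_symm (μ : Measure ℂ) (f g : ℂ → ℂ) : inn μ f g = conj' (inn μ g f) := by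
  unfold inn
  rw [← integral_conj'_eq]
  congr 1; funext z
  simp only [conj'_def, map_mul, Complex.conj_conj]
  ring

lemma phi_mem_Lsp (hα : ∀ j, ‖α j‖ < 1) (hφ : IsORF μ (piG α c) φ p)
    {k l : ℕ} (hkl : k < l) : φ k ∈ Lsp (piG α c) (l - 1) := by
  refine ⟨p k * tailProd α c (l-1) k, ?_, ?_⟩
  · exact uPoly_natDegree hφ (by omega)
  · intro z hz
    exact (ratio_eq_phi hα hφ (by omega) hz).symm

lemma inn_phi_phi (hα : ∀ j, ‖α j‖ < 1) (hc : μ {z | ¬ onT z} = 0)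
    (hφ : IsORF μ (piG α c) φ p) (k l : ℕ) :
    inn μ (φ k) (φ l) = if k = l then 1 else 0 := by
  rcases lt_trichotomy k l with h | h | h
  · rw [if_neg (by omega)]
    rw [inn_conj_symm]
    rw [hφ.orth l (by omega) (φ k) (phi_mem_Lsp hα hφ h)]
    simp [conj'_def]
  · rw [if_pos h, h]; exact hφ.norm l
  · rw [if_neg (by omega)]
    exact hφ.orth k (by omega) (φ l) (phi_mem_Lsp hα hφ h)

lemma lem_ortho (hα : ∀ j, ‖α j‖ < 1) (hc : μ {z | ¬ onT z} = 0)
    (hφ : IsORF μ (piG α c) φ p) {M k l : ℕ} (hk : k ≤ M) (hl : l ≤ M) :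
    (∫ z, conj' ((p k * tailProd α c M k).eval z / (piG α c M).eval z) *
      ((p l * tailProd α c M l).eval z / (piG α c M).eval z) ∂μ) = if k = l then 1 else 0 := by
  rw [← inn_phi_phi hα hc hφ k l]
  unfold inn
  apply integral_congr_onT hc
  intro z hz
  rw [ratio_eq_phi hα hφ hk hz, ratio_eq_phi hα hφ hl hz]

end ORF
namespace ORF

open MeasureTheory

/-- the Gram form on polynomial numerators -/
def Bform (μ : Measure ℂ) (Q : Polynomial ℂ) (q r : Polynomial ℂ) : ℂ :=
  ∫ z, conj' (q.eval z / Q.eval z) * (r.eval z / Q.eval z) ∂μ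

variable {μ : Measure ℂ} {Q : Polynomial ℂ}

lemma Bform_conj (q r : Polynomial ℂ) : Bform μ Q q r = conj' (Bform μ Q r q) := by
  unfold Bform
  rw [← integral_conj'_eq]
  congr 1; funext z
  simp only [conj'_def, map_mul, Complex.conj_conj]
  ring

lemma Bform_zero_right (q : Polynomial ℂ) : Bform μ Q q 0 = 0 := by
  unfold Bform
  simp

lemma Bform_add_right (hprob : IsProbabilityMeasure μ) (hc : μ {z | ¬ onT z} = 0)
    (hQ : ∀ z, onT z → Q.eval z ≠ 0) (q r s : Polynomial ℂ) :
    Bform μ Q q (r + s) = Bform μ Q q r + Bform μ Q q s := by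
  unfold Bform
  rw [← integral_add (integrable_ratio hprob hc q r Q hQ) (integrable_ratio hprob hc q s Q hQ)]
  congr 1; funext z
  rw [eval_add, add_div, mul_add]

lemma Bform_smul_right (a : ℂ) (q r : Polynomial ℂ) :
    Bform μ Q q (a • r) = a * Bform μ Q q r := by
  unfold Bform
  rw [← MeasureTheory.integral_const_mul]
  congr 1; funext z
  rw [eval_smul, smul_eq_mul, mul_div_assoc]
  ring

lemma Bform_sum_right (hprob : IsProbabilityMeasure μ) (hc : μ {z | ¬ onT z} = 0)
    (hQ : ∀ z, onT z → Q.eval z ≠ 0) (q : Polynomial ℂ) {ι : Type*} (s : Finset ι)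
    (g : ι → ℂ) (r : ι → Polynomial ℂ) :
    Bform μ Q q (∑ i ∈ s, g i • r i) = ∑ i ∈ s, g i * Bform μ Q q (r i) := by
  classical
  induction s using Finset.induction_on with
  | empty => simpa using Bform_zero_right q
  | insert _ _ hnot ih =>
    rw [Finset.sum_insert hnot, Finset.sum_insert hnot, Bform_add_right hprob hc hQ,
      Bform_smul_right, ih]

end ORF
namespace ORF

open MeasureTheory

variable {α : ℕ → ℂ} {c : ℕ → Bool} {μ : Measure ℂ} {φ : ℕ → ℂ → ℂ} {p : ℕ → Polynomial ℂ}

lemma conj'_pow (z : ℂ) (k : ℕ) : conj' (z ^ k) = (conj' z) ^ k := map_pow _ _ _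

lemma Bform_uu (hα : ∀ j, ‖α j‖ < 1) (hc : μ {z | ¬ onT z} = 0)
    (hφ : IsORF μ (piG α c) φ p) {M k l : ℕ} (hk : k ≤ M) (hl : l ≤ M) :
    Bform μ (piG α c M) (p k * tailProd α c M k) (p l * tailProd α c M l)
      = if k = l then 1 else 0 :=
  lem_ortho hα hc hφ hk hl

lemma Bform_v0v0 (hα : ∀ j, ‖α j‖ < 1) (hc : μ {z | ¬ onT z} = 0)
    (hφ : IsORF μ (piG α c) φ p) (n : ℕ) :
    Bform μ (piG α c (n+1)) (Polynomial.C (sigProd α (n+1)) * pstar (n+1) (p (n+1)))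
      (Polynomial.C (sigProd α (n+1)) * pstar (n+1) (p (n+1))) = 1 := by
  rw [← hφ.norm (n+1)]
  unfold Bform inn
  apply integral_congr_onT hc
  intro z hz
  have hPi : (piG α c (n+1)).eval z ≠ 0 := piG_eval_ne α hα c (n+1) hz
  have hcPi : conj' ((piG α c (n+1)).eval z) ≠ 0 := conj'_ne_zero hPi
  have hcz : conj' z * z = 1 := onT_conj_mul hz
  have hpow : (conj' z)^(n+1) * z^(n+1) = 1 := by rw [← mul_pow, hcz, one_pow]
  have hsig : conj' (sigProd α (n+1)) * sigProd α (n+1) = 1 := sigProd_conj_mul α (n+1)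
  rw [hφ.rep (n+1) z, eval_mul, eval_C,
    pstar_eval_onT (n+1) (p (n+1)) (hφ.deg (n+1)) hz]
  rw [conj'_div, conj'_div, conj'_mul, conj'_mul, conj'_pow, conj'_conj']
  field_simp
  linear_combination (conj' ((p (n+1)).eval z) * (p (n+1)).eval z * conj' (sigProd α (n+1)) *
      sigProd α (n+1)) * hpow +
    (conj' ((p (n+1)).eval z) * (p (n+1)).eval z) * hsig

end ORF
namespace ORF

open MeasureTheory

variable {α : ℕ → ℂ} {c : ℕ → Bool} {μ : Measure ℂ} {φ : ℕ → ℂ → ℂ} {p : ℕ → Polynomial ℂ}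

lemma Bform_v0_vs (hα : ∀ j, ‖α j‖ < 1) (hc : μ {z | ¬ onT z} = 0)
    (hφ : IsORF μ (piG α c) φ p) {n k : ℕ} (hk : k ≤ n) :
    Bform μ (piG α c (n+1)) (Polynomial.C (sigProd α (n+1)) * pstar (n+1) (p (n+1)))
      (Polynomial.C (sig α (n+1)) * wstarG α c (n+1) * (p k * tailProd α c n k)) = 0 := by
  set g : ℂ → ℂ := fun z =>
    (Polynomial.C (sigProd α n) * pstar n (p k * tailProd α c n k)).eval z /
      (piG α c n).eval z with hgdef
  have hgmem : g ∈ Lsp (piG α c) ((n+1) - 1) := by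
    refine ⟨Polynomial.C (sigProd α n) * pstar n (p k * tailProd α c n k), ?_, ?_⟩
    · simp only [Nat.add_sub_cancel]
      apply le_trans (natDegree_mul_le)
      have := pstar_natDegree n (p k * tailProd α c n k)
      simp only [natDegree_C]
      omega
    · intro z _
      simp only [Nat.add_sub_cancel, hgdef]
  have horth : inn μ (φ (n+1)) g = 0 := hφ.orth (n+1) (by omega) g hgmem
  have : Bform μ (piG α c (n+1)) (Polynomial.C (sigProd α (n+1)) * pstar (n+1) (p (n+1)))
      (Polynomial.C (sig α (n+1)) * wstarG α c (n+1) * (p k * tailProd α c n k))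
      = conj' (inn μ (φ (n+1)) g) := by
    unfold Bform inn
    rw [← integral_conj'_eq]
    apply integral_congr_onT hc
    intro z hz
    have hPi1 : (piG α c (n+1)).eval z ≠ 0 := piG_eval_ne α hα c (n+1) hz
    have hPi0 : (piG α c n).eval z ≠ 0 := piG_eval_ne α hα c n hz
    have hW : (wG α c (n+1)).eval z ≠ 0 := wG_eval_ne α hα c (n+1) hz
    have hWs : (wstarG α c (n+1)).eval z ≠ 0 := wstarG_eval_ne α hα c (n+1) hz
    have hWst : (Wst α c n).eval z ≠ 0 := Wst_eval_ne α hα c n hz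
    have hz0 : z ≠ 0 := onT_ne_zero hz
    have hcz0 : conj' z ≠ 0 := conj'_ne_zero hz0
    have hcz : conj' z * z = 1 := onT_conj_mul hz
    have hsig : conj' (sig α (n+1)) * sig α (n+1) = 1 := sig_conj_mul α (n+1)
    -- rewrite all the pieces
    simp only [hgdef, eval_mul, eval_C]
    rw [hφ.rep (n+1) z,
      pstar_eval_onT (n+1) (p (n+1)) (hφ.deg (n+1)) hz,
      pstar_eval_onT n (p k * tailProd α c n k) (uPoly_natDegree hφ hk) hz]
    rw [show (piG α c (n+1)) = piG α c n * wG α c (n+1) from piG_succ α c n]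
    simp only [eval_mul]
    rw [sigProd_succ α n]
    simp only [conj'_div, conj'_mul, conj'_pow, conj'_conj']
    rw [piG_eval_conj α c n hz, wG_eval_conj α c (n+1) hz]
    field_simp [hPi0, hW, hWs, hWst, hz0, hcz0]
    linear_combination (conj' (sigProd α n) * conj' z * conj' z ^ n * eval z (p (n + 1)) *
      eval z (p k) * eval z (tailProd α c n k)) * hsig
  rw [this, horth, conj'_def, map_zero]

end ORF
namespace ORF

open MeasureTheory

variable {α : ℕ → ℂ} {c : ℕ → Bool} {μ : Measure ℂ} {φ : ℕ → ℂ → ℂ} {p : ℕ → Polynomial ℂ}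

lemma Bform_vs_vs (hα : ∀ j, ‖α j‖ < 1) (hc : μ {z | ¬ onT z} = 0)
    (hφ : IsORF μ (piG α c) φ p) {n k l : ℕ} (hk : k ≤ n) (hl : l ≤ n) :
    Bform μ (piG α c (n+1)) (Polynomial.C (sig α (n+1)) * wstarG α c (n+1) * (p k * tailProd α c n k))
      (Polynomial.C (sig α (n+1)) * wstarG α c (n+1) * (p l * tailProd α c n l))
      = if k = l then 1 else 0 := by
  rw [← Bform_uu hα hc hφ hk hl]
  unfold Bform
  apply integral_congr_onT hc
  intro z hz
  have hPi0 : (piG α c n).eval z ≠ 0 := piG_eval_ne α hα c n hz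
  have hW : (wG α c (n+1)).eval z ≠ 0 := wG_eval_ne α hα c (n+1) hz
  have hWs : (wstarG α c (n+1)).eval z ≠ 0 := wstarG_eval_ne α hα c (n+1) hz
  have hz0 : z ≠ 0 := onT_ne_zero hz
  have hcz0 : conj' z ≠ 0 := conj'_ne_zero hz0
  have hsig : conj' (sig α (n+1)) * sig α (n+1) = 1 := sig_conj_mul α (n+1)
  rw [show (piG α c (n+1)) = piG α c n * wG α c (n+1) from piG_succ α c n]
  simp only [eval_mul, eval_C]
  simp only [conj'_div, conj'_mul]
  rw [wG_eval_conj α c (n+1) hz, wstarG_eval_conj α c (n+1) hz]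
  field_simp [hPi0, hW, hWs, hz0, hcz0, conj'_ne_zero hPi0]
  linear_combination (conj' (eval z (p k)) *
    conj' (eval z (tailProd α c n k)) * eval z (p l) *
    eval z (tailProd α c n l)) * hsig

end ORF
namespace ORF

open MeasureTheory

lemma kernel_eq_of_orthonormal {μ : Measure ℂ} {Q : Polynomial ℂ}
    (hprob : IsProbabilityMeasure μ) (hc : μ {z | ¬ onT z} = 0)
    (hQ : ∀ z, onT z → Q.eval z ≠ 0) {N : ℕ}
    (u v : Fin N → Polynomial ℂ)
    (hud : ∀ i, (u i).degree < (N : WithBot ℕ)) (hvd : ∀ i, (v i).degree < (N : WithBot ℕ))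
    (hN : 0 < N)
    (hONu : ∀ i j, Bform μ Q (u i) (u j) = if i = j then 1 else 0)
    (hONv : ∀ i j, Bform μ Q (v i) (v j) = if i = j then 1 else 0)
    (z w : ℂ) :
    ∑ i, (v i).eval z * conj' ((v i).eval w) = ∑ i, (u i).eval z * conj' ((u i).eval w) := by
  classical
  haveI : Nonempty (Fin N) := ⟨⟨0, hN⟩⟩
  set V := Polynomial.degreeLT ℂ N with hV
  let u' : Fin N → V := fun i => ⟨u i, Polynomial.mem_degreeLT.2 (hud i)⟩
  let v' : Fin N → V := fun i => ⟨v i, Polynomial.mem_degreeLT.2 (hvd i)⟩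
  have hcoe_sum : ∀ (g : Fin N → ℂ) (x : Fin N → V),
      ((∑ i, g i • x i : V) : Polynomial ℂ) = ∑ i, g i • (x i : Polynomial ℂ) := by
    intro g x
    simp
  -- B against a sum of u's
  have hBu_sum : ∀ (q : Polynomial ℂ) (g : Fin N → ℂ),
      Bform μ Q q (∑ i, g i • u i) = ∑ i, g i * Bform μ Q q (u i) :=
    fun q g => Bform_sum_right hprob hc hQ q Finset.univ g u
  -- linear independence of u'
  have hind : LinearIndependent ℂ u' := by
    rw [Fintype.linearIndependent_iff]
    intro g hg j
    have hsum : (∑ i, g i • u i) = 0 := by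
      have := congrArg (Subtype.val) hg
      rw [hcoe_sum] at this
      simpa using this
    have h1 : Bform μ Q (u j) (∑ i, g i • u i) = g j := by
      rw [hBu_sum]
      simp only [hONu, mul_ite, mul_one, mul_zero]
      simp [Finset.sum_ite_eq]
    rw [hsum, Bform_zero_right] at h1
    exact h1.symm
  -- spanning
  have hrank : Fintype.card (Fin N) = Module.finrank ℂ V := by
    rw [Fintype.card_fin]
    have := (Polynomial.degreeLTEquiv ℂ N).finrank_eq
    rw [this]
    simp
  have hspan := hind.span_eq_top_of_card_eq_finrank hrank
  have hvmem : ∀ i, v' i ∈ Submodule.span ℂ (Set.range u') := by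
    intro i; rw [hspan]; trivial
  have hvrep : ∀ i, ∃ g : Fin N → ℂ, ∑ k, g k • u' k = v' i := by
    intro i
    exact (Submodule.mem_span_range_iff_exists_fun ℂ).1 (hvmem i)
  choose cmat hcmat using hvrep
  have hvu : ∀ i, ∑ k, cmat i k • u k = v i := by
    intro i
    have := congrArg Subtype.val (hcmat i)
    rw [hcoe_sum] at this
    simpa using this
  -- B (v i) (u k) = conj' (cmat i k)
  have hBvu : ∀ i k, Bform μ Q (v i) (u k) = conj' (cmat i k) := by
    intro i k
    rw [Bform_conj]
    congr 1
    rw [← hvu i, hBu_sum]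
    simp only [hONu, mul_ite, mul_one, mul_zero]
    simp [Finset.sum_ite_eq]
  -- rows are orthonormal
  have hrow : ∀ i j, ∑ k, cmat j k * conj' (cmat i k) = if i = j then 1 else 0 := by
    intro i j
    rw [← hONv i j, ← hvu j, hBu_sum]
    apply Finset.sum_congr rfl
    intro k _
    rw [hBvu]
  -- columns are orthonormal, via matrices
  have hcol : ∀ k l, (∑ i, cmat i k * conj' (cmat i l)) = if k = l then 1 else 0 := by
    intro k l
    set C : Matrix (Fin N) (Fin N) ℂ := Matrix.of cmat with hC
    have hCCH : C * C.conjTranspose = 1 := by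
      ext i j
      rw [Matrix.mul_apply, Matrix.one_apply]
      have := hrow j i
      rw [show ((if j = i then (1:ℂ) else 0) = if i = j then 1 else 0) from by
        by_cases h : i = j <;> simp [h, Ne.symm, eq_comm]] at this
      rw [← this]
      apply Finset.sum_congr rfl
      intro k _
      rw [Matrix.conjTranspose_apply]
      rfl
    have hCHC : C.conjTranspose * C = 1 := mul_eq_one_comm.1 hCCH
    have h1 : (C.conjTranspose * C) k l = if k = l then 1 else 0 := by
      rw [hCHC, Matrix.one_apply]
    rw [Matrix.mul_apply] at h1
    have h2 := congrArg conj' h1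
    rw [conj'_def, map_sum] at h2
    rw [show conj' (if k = l then (1:ℂ) else 0) = if k = l then 1 else 0 from by
      by_cases h : k = l <;> simp [h, conj'_def]] at h2
    rw [← h2]
    apply Finset.sum_congr rfl
    intro i _
    rw [Matrix.conjTranspose_apply]
    simp only [conj'_def, map_mul, starRingEnd_apply, star_star, hC, Matrix.of_apply]
  -- evaluation expansions
  have hez : ∀ i, (v i).eval z = ∑ k, cmat i k * (u k).eval z := by
    intro i
    rw [← hvu i, Polynomial.eval_finset_sum]
    apply Finset.sum_congr rfl
    intro k _
    rw [Polynomial.eval_smul, smul_eq_mul]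
  have hew : ∀ i, conj' ((v i).eval w) = ∑ l, conj' (cmat i l) * conj' ((u l).eval w) := by
    intro i
    rw [← hvu i, Polynomial.eval_finset_sum, conj'_def, map_sum]
    apply Finset.sum_congr rfl
    intro k _
    rw [Polynomial.eval_smul, smul_eq_mul, map_mul]
    rfl
  calc ∑ i, (v i).eval z * conj' ((v i).eval w)
      = ∑ i, ∑ k, ∑ l, (cmat i k * conj' (cmat i l)) * ((u k).eval z * conj' ((u l).eval w)) := by
        apply Finset.sum_congr rfl
        intro i _
        rw [hez i, hew i, Finset.sum_mul_sum]
        apply Finset.sum_congr rfl; intro k _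
        apply Finset.sum_congr rfl; intro l _
        ring
    _ = ∑ k, ∑ l, (∑ i, cmat i k * conj' (cmat i l)) * ((u k).eval z * conj' ((u l).eval w)) := by
        rw [Finset.sum_comm]
        apply Finset.sum_congr rfl
        intro k _
        rw [Finset.sum_comm]
        apply Finset.sum_congr rfl
        intro l _
        rw [Finset.sum_mul]
    _ = ∑ k, (u k).eval z * conj' ((u k).eval w) := by
        apply Finset.sum_congr rfl
        intro k _
        simp only [hcol]
        simp [Finset.sum_ite_eq, ite_mul]
end ORF
namespace ORF

open MeasureTheory

variable {α : ℕ → ℂ} {c : ℕ → Bool} {μ : Measure ℂ} {φ : ℕ → ℂ → ℂ} {p : ℕ → Polynomial ℂ}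

lemma CD (hα : ∀ j, ‖α j‖ < 1) (hprob : IsProbabilityMeasure μ)
    (hc : μ {z | ¬ onT z} = 0) (hφ : IsORF μ (piG α c) φ p) (n : ℕ) (z w : ℂ)
    (hpz : (piG α c (n+1)).eval z ≠ 0) (hpw : (piG α c (n+1)).eval w ≠ 0)
    (hd : 1 - zetaG α c (n+1) z * conj' (zetaG α c (n+1) w) ≠ 0) :
    ker φ (n+1) z w =
      (starF α (piG α c) p (n+1) z * conj' (starF α (piG α c) p (n+1) w) -
        zetaG α c (n+1) z * conj' (zetaG α c (n+1) w) * (φ (n+1) z * conj' (φ (n+1) w))) /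
      (1 - zetaG α c (n+1) z * conj' (zetaG α c (n+1) w)) := by
  classical
  set u : Fin (n+2) → Polynomial ℂ := fun k => p k * tailProd α c (n+1) k with hu
  set v : Fin (n+2) → Polynomial ℂ := Fin.cases
    (Polynomial.C (sigProd α (n+1)) * pstar (n+1) (p (n+1)))
    (fun k : Fin (n+1) => Polynomial.C (sig α (n+1)) * wstarG α c (n+1) *
      (p k * tailProd α c n k)) with hv
  have hQ : ∀ x, onT x → (piG α c (n+1)).eval x ≠ 0 := fun x hx => piG_eval_ne α hα c (n+1) hx
  have hdeg : ∀ q : Polynomial ℂ, q.natDegree ≤ n+1 → q.degree < ((n+2 : ℕ) : WithBot ℕ) :=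
    fun q h => lt_of_le_of_lt Polynomial.degree_le_natDegree (by exact_mod_cast Nat.lt_succ_of_le h)
  have hud : ∀ i : Fin (n+2), (u i).degree < ((n+2 : ℕ) : WithBot ℕ) := by
    intro i
    exact hdeg _ (uPoly_natDegree hφ (Fin.is_le i))
  have hvd : ∀ i : Fin (n+2), (v i).degree < ((n+2 : ℕ) : WithBot ℕ) := by
    intro i
    induction i using Fin.cases with
    | zero =>
      apply hdeg
      simp only [hv, Fin.cases_zero]
      apply le_trans natDegree_mul_le
      have := pstar_natDegree (n+1) (p (n+1))
      simp only [natDegree_C]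
      omega
    | succ i =>
      apply hdeg
      simp only [hv, Fin.cases_succ]
      apply le_trans natDegree_mul_le
      apply le_trans (add_le_add natDegree_mul_le (uPoly_natDegree hφ (Fin.is_le i)))
      have := wstarG_natDegree α c (n+1)
      simp only [natDegree_C]
      omega
  have hONu : ∀ i j : Fin (n+2), Bform μ (piG α c (n+1)) (u i) (u j) = if i = j then 1 else 0 := by
    intro i j
    rw [hu]
    rw [Bform_uu hα hc hφ (Fin.is_le i) (Fin.is_le j)]
    simp [Fin.val_inj]
  have hONv : ∀ i j : Fin (n+2), Bform μ (piG α c (n+1)) (v i) (v j) = if i = j then 1 else 0 := by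
    intro i j
    induction i using Fin.cases with
    | zero =>
      induction j using Fin.cases with
      | zero =>
        simp only [hv, Fin.cases_zero, if_pos rfl]
        exact Bform_v0v0 hα hc hφ n
      | succ j =>
        rw [if_neg (Fin.succ_ne_zero j).symm]
        simp only [hv, Fin.cases_zero, Fin.cases_succ]
        exact Bform_v0_vs hα hc hφ (Fin.is_le j)
    | succ i =>
      induction j using Fin.cases with
      | zero =>
        rw [if_neg (Fin.succ_ne_zero i)]
        simp only [hv, Fin.cases_zero, Fin.cases_succ]
        rw [Bform_conj, Bform_v0_vs hα hc hφ (Fin.is_le i)]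
        simp [conj'_def]
      | succ j =>
        simp only [hv, Fin.cases_succ]
        rw [Bform_vs_vs hα hc hφ (Fin.is_le i) (Fin.is_le j)]
        simp [Fin.val_inj, Fin.succ_inj]
  have hkey := kernel_eq_of_orthonormal hprob hc hQ u v hud hvd (by omega) hONu hONv z w
  -- nonvanishing facts at z and w
  have hfacts : ∀ x : ℂ, (piG α c (n+1)).eval x ≠ 0 →
      (piG α c n).eval x ≠ 0 ∧ (wG α c (n+1)).eval x ≠ 0 := by
    intro x hx
    rw [piG_succ α c n, eval_mul] at hx
    exact mul_ne_zero_iff.1 hx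
  obtain ⟨hPinz, hWz⟩ := hfacts z hpz
  obtain ⟨hPinw, hWw⟩ := hfacts w hpw
  have hphi : ∀ (M k : ℕ), k ≤ M → ∀ x : ℂ, (piG α c M).eval x ≠ 0 →
      φ k x = (p k * tailProd α c M k).eval x / (piG α c M).eval x := by
    intro M k hk x hx
    rw [piG_split α c hk] at hx ⊢
    simp only [eval_mul] at hx ⊢
    obtain ⟨h1, h2⟩ := mul_ne_zero_iff.1 hx
    rw [mul_div_mul_right _ _ h2, hφ.rep k x]
  have hker_gen : ∀ (M : ℕ) (x y : ℂ), (piG α c M).eval x ≠ 0 → (piG α c M).eval y ≠ 0 →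
      ker φ M x y = (∑ i : Fin (M+1), (p (i:ℕ) * tailProd α c M (i:ℕ)).eval x *
        conj' ((p (i:ℕ) * tailProd α c M (i:ℕ)).eval y)) /
        ((piG α c M).eval x * conj' ((piG α c M).eval y)) := by
    intro M x y hx hy
    unfold ker
    rw [Finset.sum_div, ← Fin.sum_univ_eq_sum_range (fun k => φ k x * conj' (φ k y)) (M+1)]
    apply Finset.sum_congr rfl
    intro i _
    rw [hphi M i (Fin.is_le i) x hx, hphi M i (Fin.is_le i) y hy, conj'_div, div_mul_div_comm]
  have hker1 := hker_gen (n+1) z w hpz hpw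
  have hker0 := hker_gen n z w hPinz hPinw
  have hkey' : (∑ i : Fin (n+1+1), (p (i:ℕ) * tailProd α c (n+1) (i:ℕ)).eval z *
      conj' ((p (i:ℕ) * tailProd α c (n+1) (i:ℕ)).eval w))
      = ∑ i : Fin (n+2), (v i).eval z * conj' ((v i).eval w) := hkey.symm
  rw [hkey'] at hker1
  have hstar : ∀ x : ℂ, (v 0).eval x / (piG α c (n+1)).eval x = starF α (piG α c) p (n+1) x := by
    intro x
    simp only [hv, Fin.cases_zero, eval_mul, eval_C]
    unfold starF
    rw [mul_div_assoc]
  have hvs : ∀ (k : Fin (n+1)) (x : ℂ), (piG α c n).eval x ≠ 0 →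
      (v k.succ).eval x / (piG α c (n+1)).eval x = zetaG α c (n+1) x * φ (k : ℕ) x := by
    intro k x hx
    simp only [hv, Fin.cases_succ, eval_mul, eval_C]
    rw [zetaG_formula, hphi n k (Fin.is_le k) x hx, piG_succ α c n]
    simp only [eval_mul]
    ring
  have hSv : (∑ i : Fin (n+2), (v i).eval z * conj' ((v i).eval w)) /
      ((piG α c (n+1)).eval z * conj' ((piG α c (n+1)).eval w))
      = starF α (piG α c) p (n+1) z * conj' (starF α (piG α c) p (n+1) w)
        + zetaG α c (n+1) z * conj' (zetaG α c (n+1) w) * ker φ n z w := by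
    rw [Fin.sum_univ_succ, add_div, Finset.sum_div]
    congr 1
    · rw [show (v 0).eval z * conj' ((v 0).eval w) /
          ((piG α c (n+1)).eval z * conj' ((piG α c (n+1)).eval w))
          = ((v 0).eval z / (piG α c (n+1)).eval z) *
            (conj' ((v 0).eval w) / conj' ((piG α c (n+1)).eval w)) from by ring]
      rw [hstar z, ← conj'_div, hstar w]
    · have hterm : ∀ k : Fin (n+1), (v k.succ).eval z * conj' ((v k.succ).eval w) /
          ((piG α c (n+1)).eval z * conj' ((piG α c (n+1)).eval w))
          = zetaG α c (n+1) z * conj' (zetaG α c (n+1) w) *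
            (φ (k:ℕ) z * conj' (φ (k:ℕ) w)) := by
        intro k
        have h1 := hvs k z hPinz
        have h2 := hvs k w hPinw
        calc (v k.succ).eval z * conj' ((v k.succ).eval w) /
            ((piG α c (n+1)).eval z * conj' ((piG α c (n+1)).eval w))
            = ((v k.succ).eval z / (piG α c (n+1)).eval z) *
              (conj' ((v k.succ).eval w) / conj' ((piG α c (n+1)).eval w)) := by ring
          _ = ((v k.succ).eval z / (piG α c (n+1)).eval z) *
              conj' ((v k.succ).eval w / (piG α c (n+1)).eval w) := by rw [conj'_div]
          _ = (zetaG α c (n+1) z * φ (k:ℕ) z) * conj' (zetaG α c (n+1) w * φ (k:ℕ) w) := by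
              rw [h1, h2]
          _ = zetaG α c (n+1) z * conj' (zetaG α c (n+1) w) *
              (φ (k:ℕ) z * conj' (φ (k:ℕ) w)) := by rw [conj'_mul]; ring
      rw [Finset.sum_congr rfl (fun k _ => hterm k)]
      unfold ker
      rw [← Fin.sum_univ_eq_sum_range (fun k => φ k z * conj' (φ k w)) (n+1), Finset.mul_sum]
  rw [hSv] at hker1
  have hB : ker φ (n+1) z w = ker φ n z w + φ (n+1) z * conj' (φ (n+1) w) := by
    unfold ker
    rw [Finset.sum_range_succ]
  rw [eq_div_iff hd]
  linear_combination hker1 - (zetaG α c (n+1) z * conj' (zetaG α c (n+1) w)) * hB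

end ORF



open ORF MeasureTheory

/-- Christoffel–Darboux relations: for every n ≥ 0 and z, w off the unit
circle, not among the poles of φ_n^ν, φ_{n+1}^ν, and with nonvanishing denominators,
k_n^ν(z,w) = [φ_n^{ν*}(z)conj(φ_n^{ν*}(w)) − ζ_n^ν(z)conj(ζ_n^ν(w))φ_n^ν(z)conj(φ_n^ν(w))]
             /(1 − ζ_n^ν(z)conj(ζ_n^ν(w)))
           = [φ_{n+1}^{ν*}(z)conj(φ_{n+1}^{ν*}(w)) − φ_{n+1}^ν(z)conj(φ_{n+1}^ν(w))]
             /(1 − ζ_{n+1}^ν(z)conj(ζ_{n+1}^ν(w))).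
Here the sequence γ (encoded by `c`) is arbitrary, so that the three cases
ν = α (c ≡ true), ν = β (c ≡ false) and ν = γ are all covered. -/
theorem stmt7 (α : ℕ → ℂ) (hα0 : α 0 = 0) (hα : ∀ j, ‖α j‖ < 1)
    (c : ℕ → Bool) (μ : Measure ℂ) (hμ : CircleMeasure μ)
    (φ : ℕ → ℂ → ℂ) (p : ℕ → Polynomial ℂ)
    (hφ : IsORF μ (piG α c) φ p) (hnφ : ∀ n, normG α c p n)
    (n : ℕ) (z w : ℂ)
    (hz : ¬ onT z) (hw : ¬ onT w)
    (hpz : (piG α c (n + 1)).eval z ≠ 0) (hpw : (piG α c (n + 1)).eval w ≠ 0)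
    (hd1 : 1 - zetaG α c n z * conj' (zetaG α c n w) ≠ 0)
    (hd2 : 1 - zetaG α c (n + 1) z * conj' (zetaG α c (n + 1) w) ≠ 0) :
    ker φ n z w =
      (starF α (piG α c) p n z * conj' (starF α (piG α c) p n w) -
        zetaG α c n z * conj' (zetaG α c n w) * (φ n z * conj' (φ n w))) /
      (1 - zetaG α c n z * conj' (zetaG α c n w)) ∧
    ker φ n z w =
      (starF α (piG α c) p (n + 1) z * conj' (starF α (piG α c) p (n + 1) w) -
        φ (n + 1) z * conj' (φ (n + 1) w)) /
      (1 - zetaG α c (n + 1) z * conj' (zetaG α c (n + 1) w)) := by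

  have hprob := hμ.prob
  have hcirc := hμ.circ
  have hB : ker φ (n+1) z w = ker φ n z w + φ (n+1) z * conj' (φ (n+1) w) := by
    unfold ker
    rw [Finset.sum_range_succ]
  constructor
  · -- first Christoffel–Darboux identity
    cases n with
    | zero =>
      have hpi0 : piG α c 0 = 1 := by
        unfold piG
        simp
      have hphi0 : ∀ x : ℂ, φ 0 x = 1 := by
        intro x
        rw [hφ.rep 0 x, hφ.p0, hpi0]
        simp
      have hstar0 : ∀ x : ℂ, starF α (piG α c) p 0 x = 1 := by
        intro x
        unfold starF sigProd pstar
        rw [hpi0, hφ.p0]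
        simp [conj'_def]
      have hker0 : ker φ 0 z w = 1 := by
        unfold ker
        simp [hphi0, conj'_def]
      rw [hker0, hstar0 z, hstar0 w, hphi0 z, hphi0 w]
      rw [conj'_one]
      field_simp
    | succ m =>
      have hpz' : (piG α c (m+1)).eval z ≠ 0 := by
        rw [piG_succ α c (m+1), eval_mul] at hpz
        exact (mul_ne_zero_iff.1 hpz).1
      have hpw' : (piG α c (m+1)).eval w ≠ 0 := by
        rw [piG_succ α c (m+1), eval_mul] at hpw
        exact (mul_ne_zero_iff.1 hpw).1
      exact CD hα hprob hcirc hφ m z w hpz' hpw' hd1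
  · -- second Christoffel–Darboux identity
    have hCD := CD hα hprob hcirc hφ n z w hpz hpw hd2
    rw [eq_div_iff hd2] at hCD ⊢
    linear_combination hCD - (1 - zetaG α c (n+1) z * conj' (zetaG α c (n+1) w)) * hB
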